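/- Let $k$ be a field of characteristic zero, $F = k(x_1, \dots, x_{m-1})$, $K = F(x_m)$, and $\overline{F}$ the algebraic closure of $F$. If $f \in \overline{F}(x_m)$ satisfies $\partial_m(f) \in K$, then $f = g + c_0$ where $g \in K$ and $c_0 \in \overline{F}$ is the constant part of $f$. Consequently, $f \in K$ if and only if $c_0 \in F$. -/

import Mathlib

/-- The embedding of `RatFunc F` into `RatFunc E` induced by a field embedding
`ψ : F →+* E`, sending `num/denom` to `(num.map ψ)/(denom.map ψ)`. -/
noncomputable def liftRF {F E : Type*} [Field F] [Field E] (ψ : F →+* E)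
    (f : RatFunc F) : RatFunc E :=
  algebraMap (Polynomial E) (RatFunc E) (f.num.map ψ) /
    algebraMap (Polynomial E) (RatFunc E) (f.denom.map ψ)

set_option linter.unusedSectionVars false
set_option linter.unnecessarySimpa false


open Polynomial
open scoped nonZeroDivisors

namespace Stmt15Aux

section maps
variable {A B C : Type*} [Field A] [Field B] [Field C]

lemma hcomap (ψ : A →+* B) : A[X]⁰ ≤ (B[X]⁰).comap (Polynomial.mapRingHom ψ) := by
  intro x hx
  simp only [Submonoid.mem_comap, mem_nonZeroDivisors_iff_ne_zero, coe_mapRingHom] at *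
  exact fun h => hx ((Polynomial.map_eq_zero_iff ψ.injective).mp h)

/-- The ring hom `RatFunc A →+* RatFunc B` induced by `ψ : A →+* B`. -/
noncomputable def rmap (ψ : A →+* B) : RatFunc A →+* RatFunc B :=
  RatFunc.mapRingHom (Polynomial.mapRingHom ψ) (hcomap ψ)

lemma rmap_div (ψ : A →+* B) (p q : A[X]) :
    rmap ψ (algebraMap _ _ p / algebraMap _ _ q) =
      algebraMap _ _ (p.map ψ) / algebraMap _ _ (q.map ψ) := by
  have h := RatFunc.map_apply_div (Polynomial.mapRingHom ψ) (hcomap ψ) p q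
  simp only [coe_mapRingHom] at h
  calc rmap ψ (algebraMap _ _ p / algebraMap _ _ q)
      = RatFunc.map (Polynomial.mapRingHom ψ) (hcomap ψ)
          (algebraMap _ _ p / algebraMap _ _ q) :=
        congrFun (RatFunc.coe_mapRingHom_eq_coe_map _ _) _
    _ = _ := h

lemma rmap_algebraMap (ψ : A →+* B) (P : A[X]) :
    rmap ψ (algebraMap _ _ P) = algebraMap _ _ (P.map ψ) := by
  simpa using rmap_div ψ P 1

lemma rmap_C (ψ : A →+* B) (a : A) : rmap ψ (RatFunc.C a) = RatFunc.C (ψ a) := by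
  rw [← RatFunc.algebraMap_C, rmap_algebraMap, map_C, RatFunc.algebraMap_C]

lemma rmap_X (ψ : A →+* B) : rmap ψ RatFunc.X = RatFunc.X := by
  rw [← RatFunc.algebraMap_X, rmap_algebraMap, map_X, RatFunc.algebraMap_X]

lemma liftRF_eq_rmap (ψ : A →+* B) (h : RatFunc A) :
    (algebraMap (Polynomial B) (RatFunc B) (h.num.map ψ) /
      algebraMap (Polynomial B) (RatFunc B) (h.denom.map ψ)) = rmap ψ h := by
  conv_rhs => rw [← RatFunc.num_div_denom h]
  rw [rmap_div]

lemma rmap_comp (ψ1 : A →+* B) (ψ2 : B →+* C) (x : RatFunc A) :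
    rmap ψ2 (rmap ψ1 x) = rmap (ψ2.comp ψ1) x := by
  conv_lhs => rw [← RatFunc.num_div_denom x]
  conv_rhs => rw [← RatFunc.num_div_denom x]
  rw [rmap_div, rmap_div, rmap_div, map_map, map_map]

lemma num_denom_of {a b : A[X]} (hb : b.Monic) (hco : IsCoprime a b) {r : RatFunc A}
    (hr : r = algebraMap _ _ a / algebraMap _ _ b) : r.num = a ∧ r.denom = b := by
  have hbne : b ≠ 0 := hb.ne_zero
  have key : r.num * b = a * r.denom := (RatFunc.num_mul_eq_mul_denom_iff hbne).mpr hr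
  have h1 : b ∣ r.denom := by
    refine (hco.symm).dvd_of_dvd_mul_left ?_
    exact ⟨r.num, by rw [← key]; ring⟩
  have h2 : r.denom ∣ b := by
    refine (RatFunc.isCoprime_num_denom r).symm.dvd_of_dvd_mul_left ?_
    exact ⟨a, by rw [key]; ring⟩
  have hdb : r.denom = b := eq_of_monic_of_associated (RatFunc.monic_denom r) hb
    (associated_of_dvd_dvd h2 h1)
  refine ⟨?_, hdb⟩
  have := key
  rw [hdb] at this
  exact mul_right_cancel₀ hbne this

lemma rmap_num_denom (ψ : A →+* B) (r : RatFunc A) :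
    (rmap ψ r).num = r.num.map ψ ∧ (rmap ψ r).denom = r.denom.map ψ := by
  refine num_denom_of ((RatFunc.monic_denom r).map ψ)
    (by simpa [coe_mapRingHom] using
      (RatFunc.isCoprime_num_denom r).map (Polynomial.mapRingHom ψ)) ?_
  conv_lhs => rw [← RatFunc.num_div_denom r]
  rw [rmap_div]

end maps

section deriv
variable {A : Type*} [Field A]

lemma D_algebraMap (D : Derivation A (RatFunc A) (RatFunc A)) (P : A[X]) :
    D (algebraMap A[X] (RatFunc A) P) =
      algebraMap A[X] (RatFunc A) (derivative P) * D RatFunc.X := by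
  induction P using Polynomial.induction_on' with
  | add p q hp hq => simp only [map_add, derivative_add, hp, hq]; ring
  | monomial n a =>
    rw [← C_mul_X_pow_eq_monomial]
    have h1 : algebraMap A[X] (RatFunc A) (C a * X ^ n) = a • (RatFunc.X ^ n) := by
      rw [map_mul, map_pow, RatFunc.algebraMap_C, RatFunc.algebraMap_X, Algebra.smul_def,
        RatFunc.algebraMap_eq_C]
    rw [h1, D.map_smul, D.leibniz_pow]
    rw [derivative_C_mul, derivative_X_pow]
    simp only [map_mul, map_pow, map_natCast, RatFunc.algebraMap_C, RatFunc.algebraMap_X,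
      Algebra.smul_def, RatFunc.algebraMap_eq_C, smul_eq_mul, nsmul_eq_mul,
      Algebra.algebraMap_self, RingHom.id_apply]
    ring

lemma D_ext (D1 D2 : Derivation A (RatFunc A) (RatFunc A))
    (h : D1 RatFunc.X = D2 RatFunc.X) (f : RatFunc A) : D1 f = D2 f := by
  have hden : (algebraMap A[X] (RatFunc A) f.denom) ≠ 0 :=
    RatFunc.algebraMap_ne_zero (RatFunc.denom_ne_zero f)
  have key : f * algebraMap A[X] (RatFunc A) f.denom = algebraMap A[X] (RatFunc A) f.num :=
    (eq_div_iff hden).mp (RatFunc.num_div_denom f).symm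
  have e1 := congrArg D1 key
  have e2 := congrArg D2 key
  rw [Derivation.leibniz, D_algebraMap, D_algebraMap] at e1
  rw [Derivation.leibniz, D_algebraMap, D_algebraMap] at e2
  rw [h] at e1
  simp only [smul_eq_mul] at e1 e2
  have h3 := add_left_cancel (e1.trans e2.symm)
  exact mul_left_cancel₀ hden h3

lemma D_const [CharZero A] (D : Derivation A (RatFunc A) (RatFunc A))
    (hDX : D RatFunc.X = 1) {f : RatFunc A} (h0 : D f = 0) : ∃ a, f = RatFunc.C a := by
  have hden : (algebraMap A[X] (RatFunc A) f.denom) ≠ 0 :=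
    RatFunc.algebraMap_ne_zero (RatFunc.denom_ne_zero f)
  have key : f * algebraMap A[X] (RatFunc A) f.denom = algebraMap A[X] (RatFunc A) f.num :=
    (eq_div_iff hden).mp (RatFunc.num_div_denom f).symm
  have e1 := congrArg D key
  rw [Derivation.leibniz, D_algebraMap, hDX, h0, smul_zero, add_zero, D_algebraMap, hDX,
    mul_one, mul_one, smul_eq_mul] at e1
  -- e1 : f * algebraMap (derivative f.denom) = algebraMap (derivative f.num)
  have e2 : algebraMap A[X] (RatFunc A) (f.num * derivative f.denom)
      = algebraMap A[X] (RatFunc A) (derivative f.num * f.denom) := by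
    rw [map_mul, map_mul, ← key, ← e1]; ring
  have e3 : f.num * derivative f.denom = derivative f.num * f.denom :=
    RatFunc.algebraMap_injective A e2
  have hdd : f.denom ∣ derivative f.denom := by
    refine (RatFunc.isCoprime_num_denom f).symm.dvd_of_dvd_mul_left ?_
    exact ⟨derivative f.num, by linear_combination e3⟩
  have hd0 : derivative f.denom = 0 := by
    by_contra hne
    exact hne (eq_zero_of_dvd_of_degree_lt hdd
      (degree_derivative_lt (RatFunc.denom_ne_zero f)))
  have hdone : f.denom = 1 :=
    (Monic.natDegree_eq_zero (RatFunc.monic_denom f)).mp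
      (natDegree_eq_zero_of_derivative_eq_zero hd0)
  have hn0 : derivative f.num = 0 := by
    have := e3
    rw [hd0, hdone, mul_zero, mul_one] at this
    exact this.symm
  obtain ⟨a, ha⟩ : ∃ a, f.num = C a :=
    ⟨_, eq_C_of_natDegree_eq_zero (natDegree_eq_zero_of_derivative_eq_zero hn0)⟩
  refine ⟨a, ?_⟩
  rw [← RatFunc.num_div_denom f, ha, hdone, map_one, div_one, RatFunc.algebraMap_C]

end deriv

section conj
variable {A : Type*} [Field A]

lemma rmap_id (x : RatFunc A) : rmap (RingHom.id A) x = x := by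
  conv_lhs => rw [← RatFunc.num_div_denom x]
  rw [rmap_div, map_id, map_id, RatFunc.num_div_denom]

lemma rmap_symm_rmap (σ : A ≃+* A) (x : RatFunc A) :
    rmap (σ.symm : A →+* A) (rmap (σ : A →+* A) x) = x := by
  rw [rmap_comp]
  have hco : ((σ.symm : A →+* A).comp (σ : A →+* A)) = RingHom.id A :=
    RingHom.ext fun a => σ.symm_apply_apply a
  rw [hco, rmap_id]

/-- Conjugation of a derivation by a field automorphism. -/
noncomputable def conjD (σ : A ≃+* A) (D : Derivation A (RatFunc A) (RatFunc A)) :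
    Derivation A (RatFunc A) (RatFunc A) :=
  Derivation.mk'
    { toFun := fun g => rmap (σ.symm : A →+* A) (D (rmap (σ : A →+* A) g))
      map_add' := by intro g1 g2; simp only [map_add]
      map_smul' := by
        intro a g
        simp only [RingHom.id_apply]
        have h1 : rmap (σ : A →+* A) (a • g) = σ a • rmap (σ : A →+* A) g := by
          simp only [Algebra.smul_def, RatFunc.algebraMap_eq_C, map_mul, rmap_C,
            RingEquiv.coe_toRingHom]
        rw [h1, D.map_smul]
        simp only [Algebra.smul_def, RatFunc.algebraMap_eq_C, map_mul, rmap_C,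
          RingEquiv.coe_toRingHom, RingEquiv.symm_apply_apply] }
    (fun a b => by
      simp only [LinearMap.coe_mk, AddHom.coe_mk]
      rw [map_mul, Derivation.leibniz, map_add, smul_eq_mul, smul_eq_mul, map_mul, map_mul,
        rmap_symm_rmap, rmap_symm_rmap, smul_eq_mul, smul_eq_mul])

lemma D_rmap (σ : A ≃+* A) (D : Derivation A (RatFunc A) (RatFunc A))
    (hDX : D RatFunc.X = 1) (g : RatFunc A) :
    D (rmap (σ : A →+* A) g) = rmap (σ : A →+* A) (D g) := by
  have hX : conjD σ D RatFunc.X = D RatFunc.X := by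
    show rmap (σ.symm : A →+* A) (D (rmap (σ : A →+* A) RatFunc.X)) = D RatFunc.X
    rw [rmap_X, hDX, map_one]
  have h := D_ext (conjD σ D) D hX g
  have h' : rmap (σ.symm : A →+* A) (D (rmap (σ : A →+* A) g)) = D g := h
  have := congrArg (rmap (σ : A →+* A)) h'
  rwa [show (σ : A →+* A) = ((σ.symm.symm : A ≃+* A) : A →+* A) by rw [RingEquiv.symm_symm],
    rmap_symm_rmap σ.symm] at this

end conj

section polypart
variable {A : Type*} [Field A]

lemma polypart_unique {P1 p1 q1 P2 p2 q2 : A[X]} (hq1 : q1 ≠ 0) (hq2 : q2 ≠ 0)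
    (h1 : p1.degree < q1.degree) (h2 : p2.degree < q2.degree)
    (h : algebraMap A[X] (RatFunc A) P1 + algebraMap _ _ p1 / algebraMap _ _ q1
      = algebraMap A[X] (RatFunc A) P2 + algebraMap _ _ p2 / algebraMap _ _ q2) :
    P1 = P2 := by
  have hq1' : (algebraMap A[X] (RatFunc A) q1) ≠ 0 := RatFunc.algebraMap_ne_zero hq1
  have hq2' : (algebraMap A[X] (RatFunc A) q2) ≠ 0 := RatFunc.algebraMap_ne_zero hq2
  have key : (P1 - P2) * (q1 * q2) = p2 * q1 - p1 * q2 := by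
    apply RatFunc.algebraMap_injective A
    simp only [map_mul, map_sub]
    field_simp at h
    linear_combination h
  by_contra hne
  have hd : (P1 - P2) ≠ 0 := sub_ne_zero.mpr hne
  have hlhs : ((P1 - P2) * (q1 * q2)).degree = (P1 - P2).degree + (q1.degree + q2.degree) := by
    rw [degree_mul, degree_mul]
  have hbot1 : q1.degree ≠ ⊥ := fun hb => hq1 (degree_eq_bot.mp hb)
  have hbot2 : q2.degree ≠ ⊥ := fun hb => hq2 (degree_eq_bot.mp hb)
  have hrhs : (p2 * q1 - p1 * q2).degree < q1.degree + q2.degree := by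
    refine lt_of_le_of_lt (degree_sub_le _ _) (max_lt ?_ ?_)
    · rw [degree_mul, add_comm q1.degree q2.degree]
      exact WithBot.add_lt_add_right hbot1 h2
    · rw [degree_mul]
      exact WithBot.add_lt_add_right hbot2 h1
  rw [key] at hlhs
  have hge : q1.degree + q2.degree ≤ (p2 * q1 - p1 * q2).degree := by
    rw [hlhs]
    exact le_add_of_nonneg_left (zero_le_degree_iff.mpr hd)
  exact absurd hrhs (not_lt.mpr hge)

end polypart

section fixed
variable {F A : Type*} [Field F] [Field A] [Algebra F A] [Normal F A]
  [Algebra.IsSeparable F A]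

lemma fixed_mem {a : A} (h : ∀ σ : A ≃ₐ[F] A, σ a = a) :
    a ∈ Set.range (algebraMap F A) := by
  classical
  by_contra ha
  have hint : IsIntegral F a := Algebra.IsIntegral.isIntegral a
  have hmin0 : minpoly F a ≠ 0 := minpoly.ne_zero hint
  have hd1 : (minpoly F a).natDegree ≠ 1 := by
    intro h1
    exact ha (by
      have := minpoly.degree_eq_one_iff.mp
        ((degree_eq_iff_natDegree_eq hmin0).mpr h1)
      simpa [RingHom.mem_range] using this)
  have hdpos : 0 < (minpoly F a).natDegree := minpoly.natDegree_pos hint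
  have hdeg2 : 2 ≤ (minpoly F a).natDegree := by omega
  set pma : A[X] := (minpoly F a).map (algebraMap F A) with hpma
  have hpma0 : pma ≠ 0 := by
    simp only [hpma, ne_eq, Polynomial.map_eq_zero_iff (algebraMap F A).injective]
    exact hmin0
  have hsp : Splits pma :=
    (Normal.splits ‹Normal F A› a)
  have hcard : Multiset.card pma.roots = pma.natDegree := splits_iff_card_roots.mp hsp
  have hnatd : pma.natDegree = (minpoly F a).natDegree := natDegree_map_eq_of_injective
    (algebraMap F A).injective _
  have hnodup : pma.roots.Nodup := nodup_roots (Polynomial.Separable.map (Algebra.IsSeparable.isSeparable F a))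
  have haroot : a ∈ pma.roots := by
    rw [mem_roots hpma0]
    show pma.eval a = 0
    rw [hpma, eval_map, ← aeval_def, minpoly.aeval]
  have hcard2 : 2 ≤ Multiset.card pma.roots := by rw [hcard, hnatd]; exact hdeg2
  obtain ⟨b, hbmem⟩ : ∃ b, b ∈ pma.roots.erase a := by
    refine Multiset.exists_mem_of_ne_zero fun hz => ?_
    have hce := Multiset.card_erase_of_mem haroot
    rw [hz, Nat.pred_eq_sub_one] at hce
    simp only [Multiset.card_zero] at hce
    omega
  have hbne : b ≠ a := ((Multiset.Nodup.mem_erase_iff hnodup).mp hbmem).1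
  have hbroot : b ∈ pma.roots := ((Multiset.Nodup.mem_erase_iff hnodup).mp hbmem).2
  have h_ev : (Polynomial.aeval b) (minpoly F a) = 0 := by
    have := (mem_roots hpma0).mp hbroot
    rwa [IsRoot.def, hpma, eval_map, ← aeval_def] at this
  obtain ⟨σ, hσ⟩ := minpoly.exists_algEquiv_of_root' (Algebra.IsAlgebraic.isAlgebraic a) h_ev
  have hfix := h σ
  rw [hσ] at hfix
  exact hbne hfix

end fixed

section main
variable {F A : Type*} [Field F] [Field A] [CharZero A] [Algebra F A] [Normal F A]
  [Algebra.IsSeparable F A]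

lemma fixed_ratfunc {r : RatFunc A}
    (hr : ∀ σ : A ≃ₐ[F] A, rmap ((σ.toRingEquiv : A ≃+* A) : A →+* A) r = r) :
    ∃ g : RatFunc F, r = rmap (algebraMap F A) g := by
  have hnum : ∀ n : ℕ, r.num.coeff n ∈ Set.range (algebraMap F A) := by
    intro n
    refine fixed_mem fun σ => ?_
    have h1 := (rmap_num_denom ((σ.toRingEquiv : A ≃+* A) : A →+* A) r).1
    rw [hr σ] at h1
    have h2 := congrArg (fun q : A[X] => q.coeff n) h1
    simpa [coeff_map] using h2.symm
  have hden : ∀ n : ℕ, r.denom.coeff n ∈ Set.range (algebraMap F A) := by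
    intro n
    refine fixed_mem fun σ => ?_
    have h1 := (rmap_num_denom ((σ.toRingEquiv : A ≃+* A) : A →+* A) r).2
    rw [hr σ] at h1
    have h2 := congrArg (fun q : A[X] => q.coeff n) h1
    simpa [coeff_map] using h2.symm
  obtain ⟨N, hN⟩ := (Polynomial.mem_lifts _).mp ((lifts_iff_coeff_lifts _).mpr hnum)
  obtain ⟨Q, hQ⟩ := (Polynomial.mem_lifts _).mp ((lifts_iff_coeff_lifts _).mpr hden)
  refine ⟨algebraMap F[X] (RatFunc F) N / algebraMap F[X] (RatFunc F) Q, ?_⟩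
  rw [rmap_div, hN, hQ, RatFunc.num_div_denom]

theorem aux (Dm : Derivation A (RatFunc A) (RatFunc A)) (hDm : Dm RatFunc.X = 1)
    (f : RatFunc A)
    (hf : ∃ h : RatFunc F, Dm f = rmap (algebraMap F A) h)
    (P pp qq : A[X]) (hq : qq ≠ 0) (hdeg : pp.degree < qq.degree)
    (hdec : f = algebraMap A[X] (RatFunc A) P +
      algebraMap A[X] (RatFunc A) pp / algebraMap A[X] (RatFunc A) qq) :
    (∃ g : RatFunc F, f = rmap (algebraMap F A) g + RatFunc.C (P.coeff 0)) ∧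
    ((∃ g : RatFunc F, f = rmap (algebraMap F A) g) ↔
      P.coeff 0 ∈ Set.range (algebraMap F A)) := by
  obtain ⟨h, hh⟩ := hf
  have key1 : ∀ σ : A ≃ₐ[F] A,
      rmap ((σ.toRingEquiv : A ≃+* A) : A →+* A) f
        = f + RatFunc.C (σ (P.coeff 0) - P.coeff 0) := by
    intro σ
    set σr : A ≃+* A := σ.toRingEquiv with hσr
    have hcomp : ((σr : A →+* A).comp (algebraMap F A)) = algebraMap F A :=
      RingHom.ext fun a => by simpa [hσr] using σ.commutes a
    have hfix : rmap (σr : A →+* A) (rmap (algebraMap F A) h) = rmap (algebraMap F A) h := by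
      rw [rmap_comp, hcomp]
    have hD0 : Dm (rmap (σr : A →+* A) f - f) = 0 := by
      rw [map_sub, D_rmap σr Dm hDm, hh, hfix, sub_self]
    obtain ⟨c, hc⟩ := D_const Dm hDm hD0
    have hσf : rmap (σr : A →+* A) f = f + RatFunc.C c := by rw [← hc]; ring
    have hdecσ : rmap (σr : A →+* A) f
        = algebraMap A[X] (RatFunc A) (P.map (σr : A →+* A)) +
          algebraMap A[X] (RatFunc A) (pp.map (σr : A →+* A)) /
            algebraMap A[X] (RatFunc A) (qq.map (σr : A →+* A)) := by
      rw [hdec, map_add, map_div₀, rmap_algebraMap, rmap_algebraMap, rmap_algebraMap]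
    have hdecσ' : rmap (σr : A →+* A) f
        = algebraMap A[X] (RatFunc A) (P + Polynomial.C c) +
          algebraMap A[X] (RatFunc A) pp / algebraMap A[X] (RatFunc A) qq := by
      rw [hσf, hdec, map_add, RatFunc.algebraMap_C]; ring
    have hPeq : P.map (σr : A →+* A) = P + Polynomial.C c := by
      refine polypart_unique ?_ hq ?_ hdeg (hdecσ.symm.trans hdecσ')
      · exact (Polynomial.map_ne_zero_iff (σr : A →+* A).injective).mpr hq
      · rw [degree_map, degree_map]; exact hdeg
    have hcval : c = σ (P.coeff 0) - P.coeff 0 := by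
      have h2 := congrArg (fun q : A[X] => q.coeff 0) hPeq
      simp only [coeff_map, coeff_add, coeff_C_zero] at h2
      have h3 : σ (P.coeff 0) = P.coeff 0 + c := by
        simpa [hσr] using h2
      rw [h3]; ring
    rw [hσf, hcval]
  have key2 : ∀ σ : A ≃ₐ[F] A,
      rmap ((σ.toRingEquiv : A ≃+* A) : A →+* A) (f - RatFunc.C (P.coeff 0))
        = f - RatFunc.C (P.coeff 0) := by
    intro σ
    rw [map_sub, key1 σ, rmap_C, map_sub]
    have hco : (σ.toRingEquiv : A →+* A) (P.coeff 0) = σ (P.coeff 0) := rfl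
    rw [hco]
    ring
  obtain ⟨g, hg⟩ := fixed_ratfunc key2
  have part1 : f = rmap (algebraMap F A) g + RatFunc.C (P.coeff 0) := by
    rw [← hg]; ring
  refine ⟨⟨g, part1⟩, ?_, ?_⟩
  · rintro ⟨g0, hg0⟩
    have hC : RatFunc.C (P.coeff 0) = rmap (algebraMap F A) (g0 - g) := by
      rw [map_sub, ← hg0, ← hg]; ring
    refine fixed_mem (F := F) (fun σ => ?_)
    have hcomp : (((σ.toRingEquiv : A ≃+* A) : A →+* A).comp (algebraMap F A))
        = algebraMap F A := RingHom.ext fun a => by simpa using σ.commutes a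
    have hfix : rmap ((σ.toRingEquiv : A ≃+* A) : A →+* A) (RatFunc.C (P.coeff 0))
        = RatFunc.C (P.coeff 0) := by
      rw [hC, rmap_comp, hcomp]
    rw [rmap_C] at hfix
    exact (RatFunc.C (K := A)).injective hfix
  · rintro ⟨t, ht⟩
    refine ⟨g + RatFunc.C t, ?_⟩
    rw [map_add, rmap_C, ht, ← hg]; ring

end main

end Stmt15Aux


/-- Lemma 4.2: let `k` be a field of characteristic zero, `F = k(x₁,…,x_{m-1})`
(realized with `p = m-1` variables), `K = F(x_m)`, and `F̄` the algebraic closure of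
`F`.  If `f ∈ F̄(x_m)` has `∂_m(f) ∈ K` and `f = P + p/q` with polynomial part `P` and
`deg p < deg q`, then `f = g + c₀` with `g ∈ K` and `c₀ = P(0)` the constant part of
`f`; consequently `f ∈ K ↔ c₀ ∈ F`. -/
theorem stmt_15 (k : Type*) [Field k] [CharZero k] (p : ℕ)
    (Dm : Derivation (AlgebraicClosure (FractionRing (MvPolynomial (Fin p) k)))
      (RatFunc (AlgebraicClosure (FractionRing (MvPolynomial (Fin p) k))))
      (RatFunc (AlgebraicClosure (FractionRing (MvPolynomial (Fin p) k)))))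
    (hDm : Dm RatFunc.X = 1)
    (f : RatFunc (AlgebraicClosure (FractionRing (MvPolynomial (Fin p) k))))
    (hf : ∃ h : RatFunc (FractionRing (MvPolynomial (Fin p) k)),
      Dm f = liftRF (algebraMap (FractionRing (MvPolynomial (Fin p) k))
        (AlgebraicClosure (FractionRing (MvPolynomial (Fin p) k)))) h)
    (P pp qq : Polynomial (AlgebraicClosure (FractionRing (MvPolynomial (Fin p) k))))
    (hq : qq ≠ 0) (hdeg : pp.degree < qq.degree)
    (hdec : f = algebraMap (Polynomial _) (RatFunc _) P +
      algebraMap (Polynomial _) (RatFunc _) pp / algebraMap (Polynomial _) (RatFunc _) qq) :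
    (∃ g : RatFunc (FractionRing (MvPolynomial (Fin p) k)),
      f = liftRF (algebraMap (FractionRing (MvPolynomial (Fin p) k))
          (AlgebraicClosure (FractionRing (MvPolynomial (Fin p) k)))) g +
        RatFunc.C (P.coeff 0)) ∧
    ((∃ g : RatFunc (FractionRing (MvPolynomial (Fin p) k)),
        f = liftRF (algebraMap (FractionRing (MvPolynomial (Fin p) k))
          (AlgebraicClosure (FractionRing (MvPolynomial (Fin p) k)))) g) ↔
      P.coeff 0 ∈ Set.range (algebraMap (FractionRing (MvPolynomial (Fin p) k))
        (AlgebraicClosure (FractionRing (MvPolynomial (Fin p) k))))) := by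
  have hlift : ∀ (ψ : FractionRing (MvPolynomial (Fin p) k) →+*
        AlgebraicClosure (FractionRing (MvPolynomial (Fin p) k)))
      (h : RatFunc (FractionRing (MvPolynomial (Fin p) k))),
      liftRF ψ h = Stmt15Aux.rmap ψ h := fun ψ h => Stmt15Aux.liftRF_eq_rmap ψ h
  simp only [hlift] at hf ⊢
  exact Stmt15Aux.aux Dm hDm f hf P pp qq hq hdeg hdec
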